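/- arXiv:2502.15319 — 2 statements merged into one kernel-verified Lean document; each statement's English description precedes it below -/
import Mathlib

section
/- The function Ṽ: R^2 → R given by Ṽ(z) = |z|^{-2}|log|z||^{-δ} for |z| ≤ 1/2 (extended by a compactly supported bounded function) with δ > 2 lies in the two-dimensional Kato class K_2: lim_{r→0} sup_{w∈R^2} ∫_{|z-w|≤r} Ṽ(z)|log(1/|z-w|)| dz = 0. -/
open MeasureTheory Filter Metric
open Set
open scoped ENNReal

noncomputable section

local notation "E2" => EuclideanSpace ℝ (Fin 2)

lemma lintegral_norm_2d (f : ℝ → ℝ≥0∞) (hf : Measurable f) :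
    ∫⁻ x : E2, f ‖x‖ = (2 * volume (ball (0:E2) 1)) *
      ∫⁻ y in Set.Ioi (0:ℝ), ENNReal.ofReal y * f y := by
  have hdim : Module.finrank ℝ E2 = 2 := finrank_euclideanSpace_fin
  have h2 : ∫⁻ y : Set.Ioi (0:ℝ), f ↑y ∂(Measure.volumeIoiPow 1)
      = ∫⁻ y in Set.Ioi (0:ℝ), ENNReal.ofReal y * f y := by
    rw [Measure.volumeIoiPow, lintegral_withDensity_eq_lintegral_mul _
        (by fun_prop : Measurable fun r : Set.Ioi (0:ℝ) => ENNReal.ofReal (r.1 ^ 1))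
        (show Measurable fun y : Set.Ioi (0:ℝ) => f ↑y from hf.comp measurable_subtype_coe)]
    simp only [Pi.mul_apply]
    rw [lintegral_subtype_comap measurableSet_Ioi (fun y => ENNReal.ofReal (y ^ 1) * f y)]
    simp
  calc ∫⁻ x : E2, f ‖x‖
      = ∫⁻ x in ({(0:E2)}ᶜ : Set E2), f ‖x‖ := by
        rw [restrict_compl_singleton]
    _ = ∫⁻ x : ({(0:E2)}ᶜ : Set E2), f ‖x.1‖ ∂((volume : Measure E2).comap (↑)) := by
        rw [lintegral_subtype_comap (measurableSet_singleton _).compl (fun z : E2 => f ‖z‖)]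
    _ = ∫⁻ p : sphere (0:E2) 1 × Set.Ioi (0:ℝ), f p.2
          ∂((volume : Measure E2).toSphere.prod
            (.volumeIoiPow (Module.finrank ℝ E2 - 1))) := by
        rw [← (volume : Measure E2).measurePreserving_homeomorphUnitSphereProd.lintegral_comp_emb
          (Homeomorph.measurableEmbedding _) (fun p => f p.2)]
        exact lintegral_congr fun x => by simp
    _ = (volume : Measure E2).toSphere Set.univ *
          ∫⁻ y : Set.Ioi (0:ℝ), f y ∂(Measure.volumeIoiPow (Module.finrank ℝ E2 - 1)) := by
        rw [lintegral_prod (fun p : ↑(sphere (0:E2) 1) × ↑(Set.Ioi (0:ℝ)) => f ↑p.2)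
          (show AEMeasurable (fun p : ↑(sphere (0:E2) 1) × ↑(Set.Ioi (0:ℝ)) => f ↑p.2) _ from
            (by fun_prop : Measurable fun p : ↑(sphere (0:E2) 1) × ↑(Set.Ioi (0:ℝ)) => f ↑p.2).aemeasurable)]
        simp [lintegral_const, mul_comm]
    _ = (2 * volume (ball (0:E2) 1)) * ∫⁻ y in Set.Ioi (0:ℝ), ENNReal.ofReal y * f y := by
        rw [Measure.toSphere_apply_univ, hdim]
        norm_num [h2]

lemma lintegral_ball_norm_2d (g : ℝ → ℝ≥0∞) (hg : Measurable g) (t : ℝ) :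
    ∫⁻ z in ball (0:E2) t, g ‖z‖ = (2 * volume (ball (0:E2) 1)) *
      ∫⁻ s in Set.Ioo (0:ℝ) t, ENNReal.ofReal s * g s := by
  have h1 : ∫⁻ z in ball (0:E2) t, g ‖z‖
      = ∫⁻ z : E2, (Set.Iio t).indicator g ‖z‖ := by
    rw [← lintegral_indicator measurableSet_ball]
    refine lintegral_congr fun z => ?_
    by_cases h : ‖z‖ < t
    · simp [Set.indicator_of_mem, h, mem_ball_zero_iff.2 h, Set.indicator_of_mem (Set.mem_Iio.2 h)]
    · simp [Set.indicator_of_notMem, h, fun hh => h (mem_ball_zero_iff.1 hh)]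
  rw [h1, lintegral_norm_2d _ (hg.indicator measurableSet_Iio)]
  congr 1
  have h2 : ∀ y : ℝ, ENNReal.ofReal y * (Set.Iio t).indicator g y
      = (Set.Iio t).indicator (fun s => ENNReal.ofReal s * g s) y := fun y => by
    by_cases h : y < t
    · simp [Set.indicator_of_mem, Set.mem_Iio.2 h]
    · rw [Set.indicator_of_notMem (by simpa using h), Set.indicator_of_notMem (by simpa using h),
        mul_zero]
  simp_rw [h2]
  rw [lintegral_indicator measurableSet_Iio, Measure.restrict_restrict measurableSet_Iio,
    Set.Iio_inter_Ioi]

/-- `W(s) = s^{-2} |log s|^{-δ}` is antitone on `(0, e^{-δ/2}]`. -/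
lemma W_antitone {δ a b : ℝ} (hδ : 0 < δ) (ha : 0 < a) (hab : a ≤ b)
    (hb : b ≤ Real.exp (-(δ/2))) :
    b ^ (-(2:ℝ)) * |Real.log b| ^ (-δ) ≤ a ^ (-(2:ℝ)) * |Real.log a| ^ (-δ) := by
  have hb0 : 0 < b := lt_of_lt_of_le ha hab
  set t : ℝ := -Real.log a with ht
  set u : ℝ := -Real.log b with hu
  have hut : u ≤ t := by
    have := Real.log_le_log ha hab
    simp only [ht, hu]; linarith
  have hu2 : δ/2 ≤ u := by
    have := Real.log_le_log hb0 hb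
    rw [Real.log_exp] at this
    simp only [hu]; linarith
  have hu0 : 0 < u := lt_of_lt_of_le (by linarith) hu2
  have ht0 : 0 < t := lt_of_lt_of_le hu0 hut
  have hla : |Real.log a| = t := by rw [ht, abs_of_nonpos (by linarith)]
  have hlb : |Real.log b| = u := by rw [hu, abs_of_nonpos (by linarith)]
  rw [hla, hlb]
  have hkey : δ * (Real.log t - Real.log u) ≤ 2 * (t - u) := by
    have h1 : Real.log (t/u) ≤ t/u - 1 := Real.log_le_sub_one_of_pos (by positivity)
    rw [Real.log_div ht0.ne' hu0.ne'] at h1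
    have h2 : δ * (Real.log t - Real.log u) ≤ δ * (t/u - 1) := by
      apply mul_le_mul_of_nonneg_left h1 hδ.le
    have h3 : δ * (t/u - 1) = (δ/u) * (t - u) := by first | (field_simp; ring) | field_simp | (field_simp; ring_nf)
    have h4 : (δ/u) * (t - u) ≤ 2 * (t - u) := by
      apply mul_le_mul_of_nonneg_right _ (by linarith)
      rw [div_le_iff₀ hu0]; linarith
    linarith
  have ea : a ^ (-(2:ℝ)) = Real.exp (2 * t) := by
    rw [Real.rpow_def_of_pos ha]; congr 1; rw [ht]; ring
  have eb : b ^ (-(2:ℝ)) = Real.exp (2 * u) := by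
    rw [Real.rpow_def_of_pos hb0]; congr 1; rw [hu]; ring
  have et : t ^ (-δ) = Real.exp (-(δ * Real.log t)) := by
    rw [Real.rpow_def_of_pos ht0]; congr 1; ring
  have eu : u ^ (-δ) = Real.exp (-(δ * Real.log u)) := by
    rw [Real.rpow_def_of_pos hu0]; congr 1; ring
  rw [ea, eb, et, eu, ← Real.exp_add, ← Real.exp_add, Real.exp_le_exp]
  linarith

/-- `s * |log s| ≤ 2 √s` for `0 < s < 1`. -/
lemma mul_abs_log_le {s : ℝ} (h0 : 0 < s) (h1 : s < 1) :
    s * |Real.log s| ≤ 2 * Real.sqrt s := by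
  have hs : 0 < Real.sqrt s := Real.sqrt_pos.2 h0
  have hlog : |Real.log s| = -Real.log s := abs_of_nonpos (Real.log_nonpos h0.le h1.le)
  have h2 : Real.log s = 2 * Real.log (Real.sqrt s) := by
    conv_lhs => rw [← Real.sq_sqrt h0.le]
    rw [sq, Real.log_mul hs.ne' hs.ne']; ring
  have h3 : Real.log (Real.sqrt s)⁻¹ ≤ (Real.sqrt s)⁻¹ - 1 :=
    Real.log_le_sub_one_of_pos (by positivity)
  rw [Real.log_inv] at h3
  have h4 : -Real.log s ≤ 2 / Real.sqrt s := by
    rw [h2]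
    have : (Real.sqrt s)⁻¹ - 1 ≤ (Real.sqrt s)⁻¹ := by linarith
    calc -(2 * Real.log (Real.sqrt s)) = 2 * (-Real.log (Real.sqrt s)) := by ring
    _ ≤ 2 * (Real.sqrt s)⁻¹ := by nlinarith
    _ = 2 / Real.sqrt s := by rw [div_eq_mul_inv]
  calc s * |Real.log s| ≤ s * (2 / Real.sqrt s) := by
        rw [hlog]; exact mul_le_mul_of_nonneg_left h4 h0.le
  _ = 2 * (s / Real.sqrt s) := by ring
  _ = 2 * Real.sqrt s := by rw [Real.div_sqrt]

lemma fin_I {δ : ℝ} (hδ : 2 < δ) :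
    ∫⁻ s in Set.Ioo (0:ℝ) (Real.exp (-(δ/2))),
      ENNReal.ofReal (s⁻¹ * |Real.log s| ^ (1-δ)) < ⊤ := by
  set a : ℝ := δ/2 with hadef
  have ha : 1 < a := by rw [hadef]; linarith
  have ha0 : 0 < a := by linarith
  set g : ℝ → ℝ := fun s => s⁻¹ * |Real.log s| ^ (1-δ) with hg
  have himg : (fun u : ℝ => Real.exp (-u)) '' Set.Ioi a = Set.Ioo 0 (Real.exp (-a)) := by
    ext s
    constructor
    · rintro ⟨u, hu, rfl⟩
      exact ⟨Real.exp_pos _, Real.exp_lt_exp.2 (by simpa using hu)⟩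
    · rintro ⟨hs0, hs1⟩
      refine ⟨-Real.log s, ?_, by simp [Real.exp_log hs0]⟩
      have := Real.log_lt_log hs0 hs1
      rw [Real.log_exp] at this
      simp only [Set.mem_Ioi]; linarith
  have hderiv : ∀ u ∈ Set.Ioi a, HasDerivWithinAt (fun u : ℝ => Real.exp (-u))
      (-Real.exp (-u)) (Set.Ioi a) u := by
    intro u _
    have h := ((hasDerivAt_neg u).exp (x := u))
    simpa using h.hasDerivWithinAt
  have hinj : Set.InjOn (fun u : ℝ => Real.exp (-u)) (Set.Ioi a) := by
    intro p _ q _ h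
    have := Real.exp_injective h
    linarith [neg_injective this]
  have hInt : IntegrableOn g (Set.Ioo 0 (Real.exp (-a))) := by
    rw [← himg]
    rw [integrableOn_image_iff_integrableOn_abs_deriv_smul measurableSet_Ioi hderiv hinj g]
    apply ((integrableOn_Ioi_rpow_of_lt (by linarith : 1 - δ < -1) ha0).congr_fun _
      measurableSet_Ioi)
    intro u hu
    have hu0 : 0 < u := lt_trans ha0 hu
    have : |(-Real.exp (-u))| = Real.exp (-u) := by
      rw [abs_neg, abs_of_pos (Real.exp_pos _)]
    rw [hg]
    simp only [smul_eq_mul, this, Real.log_exp]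
    rw [abs_neg, abs_of_pos hu0, Real.exp_neg]
    field_simp
  have h0 : 0 ≤ᵐ[volume.restrict (Set.Ioo 0 (Real.exp (-a)))] g := by
    filter_upwards [ae_restrict_mem measurableSet_Ioo] with s hs
    have : (0:ℝ) < s := hs.1
    positivity
  have := (hasFiniteIntegral_iff_ofReal h0).1 hInt.2
  simpa [hg] using this

lemma phi_measurable (δ : ℝ) :
    Measurable (fun z : E2 => ENNReal.ofReal (‖z‖ ^ (-(2:ℝ)) * |Real.log ‖z‖| ^ (1-δ))) := by
  apply Measurable.ennreal_ofReal
  apply Measurable.mul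
  · exact measurable_norm.pow measurable_const
  · exact ((measurable_norm.log).abs.pow measurable_const)

lemma tendsto_I {δ : ℝ} (hδ : 2 < δ) :
    Tendsto (fun t : ℝ => ∫⁻ z in ball (0:E2) t,
        ENNReal.ofReal (‖z‖ ^ (-(2:ℝ)) * |Real.log ‖z‖| ^ (1-δ)))
      (nhdsWithin 0 (Set.Ioi 0)) (nhds 0) := by
  set h : E2 → ℝ≥0∞ := fun z => ENNReal.ofReal (‖z‖ ^ (-(2:ℝ)) * |Real.log ‖z‖| ^ (1-δ))
    with hh
  have hmeas : Measurable h := phi_measurable δ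
  set μ' : Measure E2 := volume.withDensity h with hμ'
  have key : ∀ t : ℝ, ∫⁻ z in ball (0:E2) t, h z = μ' (ball 0 t) := fun t =>
    (withDensity_apply h measurableSet_ball).symm
  set t₀ : ℝ := Real.exp (-(δ/2)) with ht₀
  have ht₀0 : 0 < t₀ := Real.exp_pos _
  have hfin : μ' (ball 0 t₀) < ⊤ := by
    rw [withDensity_apply h measurableSet_ball, hh]
    have hgm : Measurable fun s : ℝ => ENNReal.ofReal (s ^ (-(2:ℝ)) * |Real.log s| ^ (1-δ)) := by
      apply Measurable.ennreal_ofReal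
      exact (measurable_id.pow measurable_const).mul
        ((measurable_id.log).abs.pow measurable_const)
    rw [lintegral_ball_norm_2d _ hgm t₀]
    have hcongr : ∫⁻ s in Set.Ioo (0:ℝ) t₀,
        ENNReal.ofReal s * ENNReal.ofReal (s ^ (-(2:ℝ)) * |Real.log s| ^ (1-δ))
        = ∫⁻ s in Set.Ioo (0:ℝ) t₀, ENNReal.ofReal (s⁻¹ * |Real.log s| ^ (1-δ)) := by
      apply setLIntegral_congr_fun measurableSet_Ioo
      intro s hs
      have hs0 : 0 < s := hs.1
      beta_reduce
      rw [← ENNReal.ofReal_mul hs0.le]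
      congr 1
      have e1 : s ^ (-(2:ℝ)) = (s^(2:ℕ))⁻¹ := by
        rw [show (-(2:ℝ)) = -((2:ℕ):ℝ) by norm_num, Real.rpow_neg hs0.le, Real.rpow_natCast]
      rw [e1]
      field_simp
    rw [hcongr]
    exact ENNReal.mul_lt_top (by exact ENNReal.mul_lt_top (by norm_num) measure_ball_lt_top)
      (fin_I hδ)
  have hanti : Antitone (fun n : ℕ => ball (0:E2) (t₀ / (n+1))) := by
    intro n m hnm
    apply ball_subset_ball
    apply div_le_div_of_nonneg_left ht₀0.le (by positivity)
    have : (n:ℝ) ≤ (m:ℝ) := Nat.cast_le.2 hnm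
    linarith
  have hiInter : ⋂ n : ℕ, ball (0:E2) (t₀ / (n+1)) = {0} := by
    ext z
    simp only [Set.mem_iInter, mem_ball_zero_iff, Set.mem_singleton_iff]
    constructor
    · intro hz
      by_contra hz0
      have hzpos : 0 < ‖z‖ := norm_pos_iff.2 hz0
      obtain ⟨n, hn⟩ := exists_nat_gt (t₀ / ‖z‖)
      have := hz n
      rw [div_lt_iff₀ hzpos] at hn
      rw [lt_div_iff₀ (by positivity)] at this
      nlinarith [hzpos]
    · rintro rfl
      intro n
      simp [ht₀0, div_pos ht₀0 (by positivity : (0:ℝ) < (n:ℝ)+1)]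
  have hseq : Tendsto (fun n : ℕ => μ' (ball (0:E2) (t₀ / (n+1)))) atTop (nhds 0) := by
    have h0 : μ' ({(0:E2)} : Set E2) = 0 := by
      rw [hμ', withDensity_apply _ (measurableSet_singleton _),
        setLIntegral_measure_zero _ _ (measure_singleton _)]
    have := tendsto_measure_iInter_atTop (μ := μ')
      (fun n => measurableSet_ball.nullMeasurableSet) hanti ⟨0, by simpa using hfin.ne⟩
    rw [hiInter, h0] at this
    exact this
  rw [ENNReal.tendsto_nhds_zero]
  intro ε hε
  obtain ⟨N, hN⟩ : ∃ N : ℕ, μ' (ball (0:E2) (t₀ / (N+1))) ≤ ε := by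
    rcases (hseq.eventually_le_const hε).exists with ⟨N, hN⟩
    exact ⟨N, hN⟩
  have hpos : (0:ℝ) < t₀ / (N+1) := by positivity
  filter_upwards [Ioo_mem_nhdsGT_of_mem ⟨le_refl (0:ℝ), hpos⟩] with r hr
  calc ∫⁻ z in ball (0:E2) r, h z = μ' (ball 0 r) := key r
  _ ≤ μ' (ball 0 (t₀ / (N+1))) := measure_mono (ball_subset_ball hr.2.le)
  _ ≤ ε := hN

lemma pointwise_bound {δ M r : ℝ} (hδ : 2 < δ) (hM : 0 ≤ M)
    {V : E2 → ℝ}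
    (hVform : ∀ z : E2, ‖z‖ ≤ 1/2 → V z = ‖z‖ ^ (-(2:ℝ)) * |Real.log ‖z‖| ^ (-δ))
    (hVbdd : ∀ z : E2, 1/2 < ‖z‖ → |V z| ≤ M)
    (hr0 : 0 < r) (hr : r ≤ Real.exp (-δ)) (x y : E2) (hy : y ∈ ball x r) :
    |Real.log (1/‖x-y‖)| * |V y| ≤
      (M + (Real.log 2) ^ (-δ) / r) * |Real.log ‖x-y‖|
      + ‖x-y‖ ^ (-(2:ℝ)) * |Real.log ‖x-y‖| ^ (1-δ)
      + (ball (0:E2) (Real.sqrt r)).indicator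
          (fun w => ‖w‖ ^ (-(2:ℝ)) * |Real.log ‖w‖| ^ (1-δ)) y := by
  have hlog2 : 0 < Real.log 2 := Real.log_pos (by norm_num)
  have hCr : 0 ≤ M + (Real.log 2) ^ (-δ) / r := by
    have : (0:ℝ) ≤ (Real.log 2) ^ (-δ) := Real.rpow_nonneg hlog2.le _
    positivity
  have hPhi : ∀ w : E2, 0 ≤ ‖w‖ ^ (-(2:ℝ)) * |Real.log ‖w‖| ^ (1-δ) := fun w =>
    mul_nonneg (Real.rpow_nonneg (norm_nonneg _) _) (Real.rpow_nonneg (abs_nonneg _) _)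
  have hind : 0 ≤ (ball (0:E2) (Real.sqrt r)).indicator
      (fun w => ‖w‖ ^ (-(2:ℝ)) * |Real.log ‖w‖| ^ (1-δ)) y :=
    Set.indicator_nonneg (fun w _ => hPhi w) y
  set u : ℝ := ‖x - y‖ with hudef
  have hu : u < r := by
    rw [hudef, ← dist_eq_norm, dist_comm]
    exact mem_ball.1 hy
  have habs : |Real.log (1/u)| = |Real.log u| := by
    rw [one_div, Real.log_inv, abs_neg]
  rw [habs]
  have hr1 : r < 1 := lt_of_le_of_lt hr (by
    have : -δ < 0 := by linarith
    exact Real.exp_lt_one_iff.2 this)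
  -- the degenerate case u = 0
  rcases eq_or_lt_of_le (norm_nonneg (x - y) : (0:ℝ) ≤ u) with h0 | hu0
  · rw [show u = 0 from h0.symm]
    simp only [Real.log_zero, abs_zero, zero_mul, mul_zero, zero_add]
    rw [Real.zero_rpow (by norm_num : (-(2:ℝ)) ≠ 0), zero_mul, zero_add]
    exact hind
  -- now 0 < u < r < 1
  have hu1 : u < 1 := hu.trans hr1
  have hlogu : Real.log u < 0 := Real.log_neg hu0 hu1
  have habsu : |Real.log u| = -Real.log u := abs_of_neg hlogu
  have hsqrt_exp : Real.sqrt (Real.exp (-δ)) = Real.exp (-(δ/2)) := by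
    rw [show Real.exp (-δ) = (Real.exp (-(δ/2)))^2 by
      rw [sq, ← Real.exp_add]; ring_nf]
    exact Real.sqrt_sq (Real.exp_pos _).le
  have hsr : Real.sqrt r ≤ Real.exp (-(δ/2)) := by
    rw [← hsqrt_exp]; exact Real.sqrt_le_sqrt hr
  have hhalf : Real.exp (-(δ/2)) < 1/2 := by
    have h1 : Real.exp (-(δ/2)) < Real.exp (-1) := by
      apply Real.exp_lt_exp.2; linarith
    have h2 : (2:ℝ) < Real.exp 1 := by
      have := Real.add_one_le_exp 1
      nlinarith [Real.exp_one_gt_d9]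
    have h3 : Real.exp (-1) = (Real.exp 1)⁻¹ := Real.exp_neg 1
    rw [h3] at h1
    have : (Real.exp 1)⁻¹ < 1/2 := by
      rw [inv_lt_iff_one_lt_mul₀ (Real.exp_pos 1)] at *
      nlinarith
    linarith
  -- case analysis on ‖y‖
  rcases lt_or_ge (1/2 : ℝ) ‖y‖ with hcase1 | hcase1
  · -- far region : |V y| ≤ M
    have h1 : |Real.log u| * |V y| ≤ |Real.log u| * M :=
      mul_le_mul_of_nonneg_left (hVbdd y hcase1) (abs_nonneg _)
    have h2 : |Real.log u| * M ≤ (M + Real.log 2 ^ (-δ) / r) * |Real.log u| := by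
      rw [mul_comm]
      apply mul_le_mul_of_nonneg_right _ (abs_nonneg _)
      have : (0:ℝ) ≤ (Real.log 2) ^ (-δ) / r := by
        have := Real.rpow_nonneg hlog2.le (-δ); positivity
      linarith
    linarith [hPhi (x - y), hind, h1, h2]
  · have hVy : V y = ‖y‖ ^ (-(2:ℝ)) * |Real.log ‖y‖| ^ (-δ) := hVform y hcase1
    have hVy0 : 0 ≤ V y := by
      rw [hVy]
      exact mul_nonneg (Real.rpow_nonneg (norm_nonneg _) _) (Real.rpow_nonneg (abs_nonneg _) _)
    have habsV : |V y| = V y := abs_of_nonneg hVy0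
    rcases lt_or_ge ‖y‖ (Real.sqrt r) with hcase2 | hcase2
    · -- ‖y‖ < √r
      rcases eq_or_lt_of_le (norm_nonneg y) with hy0 | hy0
      · -- y = 0 : V y = 0
        have : V y = 0 := by
          rw [hVy, ← hy0]
          simp [Real.zero_rpow (by norm_num : (-(2:ℝ)) ≠ 0)]
        rw [habsV, this, mul_zero]
        have : (0:ℝ) ≤ (M + Real.log 2 ^ (-δ) / r) * |Real.log u| :=
          mul_nonneg hCr (abs_nonneg _)
        linarith [hPhi (x - y), hind]
      · rcases le_or_gt u ‖y‖ with hcase3 | hcase3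
        · -- u ≤ ‖y‖ : use antitonicity of W
          have hW : ‖y‖ ^ (-(2:ℝ)) * |Real.log ‖y‖| ^ (-δ)
              ≤ u ^ (-(2:ℝ)) * |Real.log u| ^ (-δ) :=
            W_antitone (by linarith) hu0 hcase3 (le_trans hcase2.le hsr)
          have hlogu_pos : 0 < |Real.log u| := by rw [habsu]; linarith
          have key : |Real.log u| * (u ^ (-(2:ℝ)) * |Real.log u| ^ (-δ))
              = u ^ (-(2:ℝ)) * |Real.log u| ^ (1-δ) := by
            rw [show (1-δ) = 1 + (-δ) by ring, Real.rpow_add hlogu_pos, Real.rpow_one]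
            ring
          have h1 : |Real.log u| * |V y| ≤ u ^ (-(2:ℝ)) * |Real.log u| ^ (1-δ) := by
            rw [habsV, hVy, ← key]
            exact mul_le_mul_of_nonneg_left hW (abs_nonneg _)
          have h2 : (0:ℝ) ≤ (M + Real.log 2 ^ (-δ) / r) * |Real.log u| :=
            mul_nonneg hCr (abs_nonneg _)
          linarith [hind]
        · -- ‖y‖ < u : transfer the log
          have hylt1 : ‖y‖ < 1 := lt_trans hcase3 hu1
          have hlogy : Real.log ‖y‖ < 0 := Real.log_neg hy0 hylt1
          have hlogle : |Real.log u| ≤ |Real.log ‖y‖| := by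
            rw [habsu, abs_of_neg hlogy]
            have := Real.log_le_log hy0 hcase3.le
            linarith
          have h1 : |Real.log u| * |V y| ≤ |Real.log ‖y‖| * V y := by
            rw [habsV]
            exact mul_le_mul_of_nonneg_right hlogle hVy0
          have key : |Real.log ‖y‖| * V y = ‖y‖ ^ (-(2:ℝ)) * |Real.log ‖y‖| ^ (1-δ) := by
            have hlogy_pos : 0 < |Real.log ‖y‖| := by rw [abs_of_neg hlogy]; linarith
            rw [hVy, show (1-δ) = 1 + (-δ) by ring, Real.rpow_add hlogy_pos, Real.rpow_one]
            ring
          have hmem : y ∈ ball (0:E2) (Real.sqrt r) := mem_ball_zero_iff.2 hcase2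
          rw [Set.indicator_of_mem hmem]
          have h2 : (0:ℝ) ≤ (M + Real.log 2 ^ (-δ) / r) * |Real.log u| :=
            mul_nonneg hCr (abs_nonneg _)
          linarith [hPhi (x - y), h1, key ▸ h1]
    · -- √r ≤ ‖y‖ ≤ 1/2 : |V y| ≤ (log 2)^{-δ}/r
      have hsr0 : 0 < Real.sqrt r := Real.sqrt_pos.2 hr0
      have hy0 : 0 < ‖y‖ := lt_of_lt_of_le hsr0 hcase2
      have h1 : ‖y‖ ^ (-(2:ℝ)) ≤ (Real.sqrt r) ^ (-(2:ℝ)) :=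
        Real.rpow_le_rpow_of_nonpos hsr0 hcase2 (by norm_num)
      have h1' : (Real.sqrt r) ^ (-(2:ℝ)) = r⁻¹ := by
        rw [show (-(2:ℝ)) = -((2:ℕ):ℝ) by norm_num, Real.rpow_neg hsr0.le,
          Real.rpow_natCast, Real.sq_sqrt hr0.le]
      have h2 : |Real.log ‖y‖| ^ (-δ) ≤ (Real.log 2) ^ (-δ) := by
        apply Real.rpow_le_rpow_of_nonpos hlog2 _ (by linarith)
        have hlogy : Real.log ‖y‖ ≤ Real.log (1/2) := Real.log_le_log hy0 hcase1
        rw [show Real.log (1/2 : ℝ) = -Real.log 2 by rw [one_div, Real.log_inv]] at hlogy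
        calc Real.log 2 ≤ -Real.log ‖y‖ := by linarith
        _ ≤ |Real.log ‖y‖| := neg_le_abs _
      have hVle : |V y| ≤ (Real.log 2) ^ (-δ) / r := by
        rw [habsV, hVy]
        calc ‖y‖ ^ (-(2:ℝ)) * |Real.log ‖y‖| ^ (-δ)
            ≤ (Real.sqrt r) ^ (-(2:ℝ)) * (Real.log 2) ^ (-δ) :=
              mul_le_mul h1 h2 (Real.rpow_nonneg (abs_nonneg _) _)
                (Real.rpow_nonneg hsr0.le _)
        _ = (Real.log 2) ^ (-δ) / r := by rw [h1', div_eq_mul_inv]; ring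
      have h3 : |Real.log u| * |V y| ≤ (M + Real.log 2 ^ (-δ) / r) * |Real.log u| := by
        rw [mul_comm]
        apply mul_le_mul_of_nonneg_right _ (abs_nonneg _)
        linarith
      linarith [hPhi (x - y), hind]

/-- The function `Ṽ(z) = |z|^{-2} |log|z||^{-δ}` near the origin (extended by a bounded,
compactly supported function) with `δ > 2` lies in the two-dimensional Kato class `K_2`. -/
theorem example_potential_in_K2 (δ : ℝ) (hδ : 2 < δ)
    (V : EuclideanSpace ℝ (Fin 2) → ℝ)
    (hVform : ∀ z : EuclideanSpace ℝ (Fin 2), ‖z‖ ≤ 1 / 2 →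
      V z = ‖z‖ ^ (-(2 : ℝ)) * |Real.log ‖z‖| ^ (-δ))
    (hVbdd : ∃ M : ℝ, ∀ z : EuclideanSpace ℝ (Fin 2), 1 / 2 < ‖z‖ → |V z| ≤ M)
    (hsupp : HasCompactSupport V) :
    Tendsto
      (fun r : ℝ => ⨆ x : EuclideanSpace ℝ (Fin 2),
        ∫⁻ y in ball x r, ENNReal.ofReal (|Real.log (1 / ‖x - y‖)| * |V y|))
      (nhdsWithin 0 (Set.Ioi 0)) (nhds 0) := by
  classical
  obtain ⟨M₀, hM₀⟩ := hVbdd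
  set M : ℝ := max M₀ 0 with hMdef
  have hM : 0 ≤ M := le_max_right _ _
  have hVb : ∀ z : E2, 1/2 < ‖z‖ → |V z| ≤ M := fun z hz => (hM₀ z hz).trans (le_max_left _ _)
  set c : ℝ≥0∞ := 2 * volume (ball (0:E2) 1) with hcdef
  have hc : c ≠ ⊤ := by
    rw [hcdef]
    exact (ENNReal.mul_lt_top (by norm_num) measure_ball_lt_top).ne
  set L : ℝ := (Real.log 2) ^ (-δ) with hLdef
  have hL : 0 ≤ L := Real.rpow_nonneg (Real.log_pos (by norm_num)).le _
  set Φe : E2 → ℝ := fun w => ‖w‖ ^ (-(2:ℝ)) * |Real.log ‖w‖| ^ (1-δ) with hΦe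
  have hΦe0 : ∀ w, 0 ≤ Φe w := fun w =>
    mul_nonneg (Real.rpow_nonneg (norm_nonneg _) _) (Real.rpow_nonneg (abs_nonneg _) _)
  set Idef : ℝ → ℝ≥0∞ := fun t => ∫⁻ z in ball (0:E2) t, ENNReal.ofReal (Φe z) with hIdef
  set B : ℝ → ℝ≥0∞ := fun r =>
    c * ENNReal.ofReal (2 * Real.sqrt r * (M * r + L)) + Idef r + Idef (Real.sqrt r) with hB
  -- Step 1 : the bound
  have hbound : ∀ r : ℝ, 0 < r → r ≤ Real.exp (-δ) →
      (⨆ x : E2, ∫⁻ y in ball x r, ENNReal.ofReal (|Real.log (1/‖x - y‖)| * |V y|)) ≤ B r := by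
    intro r hr0 hr
    apply iSup_le
    intro x
    set Cr : ℝ := M + L / r with hCr
    have hCr0 : 0 ≤ Cr := by positivity
    have hpre : ball x r = (fun y : E2 => x - y) ⁻¹' (ball 0 r) := by
      ext y
      simp only [Set.mem_preimage, mem_ball_zero_iff, mem_ball, dist_eq_norm, norm_sub_rev, sub_zero]
    have hmp : MeasurePreserving (fun y : E2 => x - y) volume volume :=
      Measure.measurePreserving_sub_left volume x
    have hemb : MeasurableEmbedding (fun y : E2 => x - y) :=
      (MeasurableEquiv.subLeft x).measurableEmbedding
    -- pointwise estimate
    have hpt : ∀ y ∈ ball x r,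
        ENNReal.ofReal (|Real.log (1/‖x - y‖)| * |V y|) ≤
          ENNReal.ofReal (Cr * |Real.log ‖x - y‖|) + ENNReal.ofReal (Φe (x - y))
          + ENNReal.ofReal ((ball (0:E2) (Real.sqrt r)).indicator Φe y) := by
      intro y hy
      have h := pointwise_bound hδ hM hVform hVb hr0 hr x y hy
      calc ENNReal.ofReal (|Real.log (1/‖x - y‖)| * |V y|)
          ≤ ENNReal.ofReal (Cr * |Real.log ‖x - y‖| + Φe (x - y)
              + (ball (0:E2) (Real.sqrt r)).indicator Φe y) :=
            ENNReal.ofReal_le_ofReal h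
        _ ≤ ENNReal.ofReal (Cr * |Real.log ‖x - y‖| + Φe (x - y))
              + ENNReal.ofReal ((ball (0:E2) (Real.sqrt r)).indicator Φe y) :=
            ENNReal.ofReal_add_le
        _ ≤ _ := by
            gcongr
            exact ENNReal.ofReal_add_le
    have hmeas1 : Measurable fun y : E2 => ENNReal.ofReal (Cr * |Real.log ‖x - y‖|) := by
      apply Measurable.ennreal_ofReal
      exact measurable_const.mul (((measurable_const.sub measurable_id).norm).log.abs)
    have hmeas2 : Measurable fun y : E2 => ENNReal.ofReal (Φe (x - y)) := by
      apply Measurable.ennreal_ofReal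
      exact ((((measurable_const.sub measurable_id).norm).pow measurable_const).mul
        ((((measurable_const.sub measurable_id).norm).log.abs).pow measurable_const))
    calc ∫⁻ y in ball x r, ENNReal.ofReal (|Real.log (1/‖x - y‖)| * |V y|)
        ≤ ∫⁻ y in ball x r, (ENNReal.ofReal (Cr * |Real.log ‖x - y‖|)
            + ENNReal.ofReal (Φe (x - y))
            + ENNReal.ofReal ((ball (0:E2) (Real.sqrt r)).indicator Φe y)) := by
          apply setLIntegral_mono' measurableSet_ball hpt
      _ = (∫⁻ y in ball x r, ENNReal.ofReal (Cr * |Real.log ‖x - y‖|))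
            + (∫⁻ y in ball x r, ENNReal.ofReal (Φe (x - y)))
            + ∫⁻ y in ball x r, ENNReal.ofReal ((ball (0:E2) (Real.sqrt r)).indicator Φe y) := by
          rw [lintegral_add_left (f := fun y => ENNReal.ofReal (Cr * |Real.log ‖x - y‖|) + ENNReal.ofReal (Φe (x - y))) (hmeas1.add hmeas2), lintegral_add_left hmeas1]
      _ ≤ c * ENNReal.ofReal (2 * Real.sqrt r * (M * r + L)) + Idef r + Idef (Real.sqrt r) := by
          gcongr
          · -- first term
            have htrans : ∫⁻ y in ball x r, ENNReal.ofReal (Cr * |Real.log ‖x - y‖|)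
                = ∫⁻ w in ball (0:E2) r, ENNReal.ofReal (Cr * |Real.log ‖w‖|) := by
              rw [hpre]
              exact hmp.setLIntegral_comp_preimage_emb hemb
                (fun w => ENNReal.ofReal (Cr * |Real.log ‖w‖|)) _
            rw [htrans]
            have hrad : ∫⁻ w in ball (0:E2) r, ENNReal.ofReal (Cr * |Real.log ‖w‖|)
                = c * ∫⁻ s in Set.Ioo (0:ℝ) r,
                    ENNReal.ofReal s * ENNReal.ofReal (Cr * |Real.log s|) := by
              exact lintegral_ball_norm_2d (fun s => ENNReal.ofReal (Cr * |Real.log s|))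
                (Measurable.ennreal_ofReal (measurable_const.mul (measurable_id.log.abs))) r
            rw [hrad]
            have hptw : ∀ s ∈ Set.Ioo (0:ℝ) r,
                ENNReal.ofReal s * ENNReal.ofReal (Cr * |Real.log s|)
                  ≤ ENNReal.ofReal (Cr * (2 * Real.sqrt r)) := by
              intro s hs
              rw [← ENNReal.ofReal_mul hs.1.le]
              apply ENNReal.ofReal_le_ofReal
              have hs1 : s < 1 := lt_of_lt_of_le hs.2 (hr.trans (Real.exp_lt_one_iff.2
                (by linarith)).le)
              have h1 : s * |Real.log s| ≤ 2 * Real.sqrt s := mul_abs_log_le hs.1 hs1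
              have h2 : Real.sqrt s ≤ Real.sqrt r := Real.sqrt_le_sqrt hs.2.le
              calc s * (Cr * |Real.log s|) = Cr * (s * |Real.log s|) := by ring
              _ ≤ Cr * (2 * Real.sqrt r) := by
                  apply mul_le_mul_of_nonneg_left _ hCr0
                  linarith
            calc c * ∫⁻ s in Set.Ioo (0:ℝ) r,
                  ENNReal.ofReal s * ENNReal.ofReal (Cr * |Real.log s|)
                ≤ c * ∫⁻ _ in Set.Ioo (0:ℝ) r, ENNReal.ofReal (Cr * (2 * Real.sqrt r)) :=
                  mul_le_mul_right (setLIntegral_mono' measurableSet_Ioo hptw) c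
              _ = c * (ENNReal.ofReal (Cr * (2 * Real.sqrt r)) * ENNReal.ofReal r) := by
                  rw [setLIntegral_const, Real.volume_Ioo, sub_zero]
              _ = c * ENNReal.ofReal (2 * Real.sqrt r * (M * r + L)) := by
                  congr 1
                  rw [← ENNReal.ofReal_mul (by positivity)]
                  congr 1
                  rw [hCr]
                  field_simp
          · -- second term
            have htrans : ∫⁻ y in ball x r, ENNReal.ofReal (Φe (x - y))
                = ∫⁻ w in ball (0:E2) r, ENNReal.ofReal (Φe w) := by
              rw [hpre]
              exact hmp.setLIntegral_comp_preimage_emb hemb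
                (fun w => ENNReal.ofReal (Φe w)) _
            rw [htrans, hIdef]
          · -- third term
            have heq : ∀ y : E2, ENNReal.ofReal ((ball (0:E2) (Real.sqrt r)).indicator Φe y)
                = (ball (0:E2) (Real.sqrt r)).indicator
                    (fun w => ENNReal.ofReal (Φe w)) y := by
              intro y
              by_cases h : y ∈ ball (0:E2) (Real.sqrt r)
              · rw [Set.indicator_of_mem h, Set.indicator_of_mem h]
              · rw [Set.indicator_of_notMem h, Set.indicator_of_notMem h, ENNReal.ofReal_zero]
            simp_rw [heq]
            calc ∫⁻ y in ball x r,
                  (ball (0:E2) (Real.sqrt r)).indicator (fun w => ENNReal.ofReal (Φe w)) y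
                ≤ ∫⁻ y, (ball (0:E2) (Real.sqrt r)).indicator
                    (fun w => ENNReal.ofReal (Φe w)) y := setLIntegral_le_lintegral _ _
              _ = Idef (Real.sqrt r) := by
                  rw [lintegral_indicator measurableSet_ball]
  -- Step 2 : B tends to 0
  have hBt : Tendsto B (nhdsWithin 0 (Set.Ioi 0)) (nhds 0) := by
    have h1 : Tendsto (fun r : ℝ => c * ENNReal.ofReal (2 * Real.sqrt r * (M * r + L)))
        (nhdsWithin 0 (Set.Ioi 0)) (nhds 0) := by
      have hcont : Continuous (fun r : ℝ => 2 * Real.sqrt r * (M * r + L)) := by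
        continuity
      have hc0 : Tendsto (fun r : ℝ => 2 * Real.sqrt r * (M * r + L))
          (nhdsWithin 0 (Set.Ioi 0)) (nhds 0) := by
        have h00 : (2 * Real.sqrt 0 * (M * 0 + L)) = 0 := by simp
        have := (hcont.tendsto 0).mono_left
          (nhdsWithin_le_nhds (s := Set.Ioi (0:ℝ)))
        rwa [h00] at this
      have h0 : Tendsto (fun r : ℝ => ENNReal.ofReal (2 * Real.sqrt r * (M * r + L)))
          (nhdsWithin 0 (Set.Ioi 0)) (nhds 0) := by
        have := (ENNReal.continuous_ofReal.tendsto 0).comp hc0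
        rwa [ENNReal.ofReal_zero] at this
      have := ENNReal.Tendsto.const_mul h0 (Or.inr hc)
      simpa using this
    have h2 : Tendsto Idef (nhdsWithin 0 (Set.Ioi 0)) (nhds 0) := tendsto_I hδ
    have hsqrt : Tendsto Real.sqrt (nhdsWithin 0 (Set.Ioi 0)) (nhdsWithin 0 (Set.Ioi 0)) := by
      apply tendsto_nhdsWithin_iff.2
      constructor
      · have := (Real.continuous_sqrt.tendsto 0).mono_left
          (nhdsWithin_le_nhds (s := Set.Ioi (0:ℝ)))
        simpa using this
      · filter_upwards [self_mem_nhdsWithin] with a ha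
        exact Real.sqrt_pos.2 ha
    have h3 : Tendsto (fun r : ℝ => Idef (Real.sqrt r)) (nhdsWithin 0 (Set.Ioi 0)) (nhds 0) :=
      h2.comp hsqrt
    have := (h1.add h2).add h3
    simpa only [add_zero] using this
  -- Step 3 : squeeze
  have hub : ∀ᶠ r in nhdsWithin (0:ℝ) (Set.Ioi 0),
      (⨆ x : E2, ∫⁻ y in ball x r, ENNReal.ofReal (|Real.log (1/‖x - y‖)| * |V y|)) ≤ B r := by
    filter_upwards [Ioc_mem_nhdsGT_of_mem ⟨le_refl (0:ℝ), Real.exp_pos (-δ)⟩] with r hr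
    exact hbound r hr.1 hr.2
  exact tendsto_of_tendsto_of_tendsto_of_le_of_le' tendsto_const_nhds hBt
    (Filter.Eventually.of_forall (fun r => zero_le)) hub
end
end

section
/- There exists NO constant A > 0 such that for all τ > 0 and all x ∈ R⁴ \ {0}, |E_τ(x)| ≤ A/|x|², where E_τ(x) = (1/(2π|x|²))(cos(τr) − x₁ sin(τr)/r) with r = |x'|. -/
/-- The explicit 4-dimensional fundamental solution of the conjugated Laplacian,
`E_τ(x) = (1/(2π|x|²)) (cos(τr) − x₁ sin(τr)/r)` with `x = (x₁,x') ∈ ℝ × ℝ³`, `r = |x'|`. -/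
noncomputable def Efour (τ x₁ : ℝ) (x' : EuclideanSpace ℝ (Fin 3)) : ℝ :=
  (1 / (2 * Real.pi * (x₁ ^ 2 + ‖x'‖ ^ 2))) *
    (Real.cos (τ * ‖x'‖) - x₁ * Real.sin (τ * ‖x'‖) / ‖x'‖)

/-- There is NO constant `A > 0` such that `|E_τ(x)| ≤ A/|x|²` for all `τ > 0` and all
nonzero `x ∈ ℝ⁴`. -/
theorem no_uniform_pointwise_bound_dim_four :
    ¬ ∃ A : ℝ, 0 < A ∧ ∀ τ : ℝ, 0 < τ → ∀ (x₁ : ℝ) (x' : EuclideanSpace ℝ (Fin 3)),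
      (x₁ ≠ 0 ∨ x' ≠ 0) → |Efour τ x₁ x'| ≤ A / (x₁ ^ 2 + ‖x'‖ ^ 2) := by
  rintro ⟨A, hA, h⟩
  have hπ := Real.pi_pos
  set x₁ : ℝ := 2 * Real.pi * A + 1 with hx₁def
  have hx₁ : (0:ℝ) < x₁ := by positivity
  have hx' : ‖(EuclideanSpace.single 0 1 : EuclideanSpace ℝ (Fin 3))‖ = 1 := by
    simp [EuclideanSpace.norm_single]
  have hb := h (Real.pi / 2) (by positivity) x₁ (EuclideanSpace.single 0 1) (Or.inl hx₁.ne')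
  rw [Efour, hx'] at hb
  simp only [mul_one, Real.cos_pi_div_two, Real.sin_pi_div_two, one_pow, div_one] at hb
  have hd : (0:ℝ) < x₁ ^ 2 + 1 := by positivity
  have habs : |1 / (2 * Real.pi * (x₁ ^ 2 + 1)) * (0 - x₁)| =
      x₁ / (2 * Real.pi * (x₁ ^ 2 + 1)) := by
    rw [abs_of_nonpos (by
      apply mul_nonpos_of_nonneg_of_nonpos
      · positivity
      · nlinarith)]
    field_simp
    ring
  rw [habs] at hb
  rw [div_le_div_iff₀ (by positivity) hd] at hb
  nlinarith [sq_nonneg x₁]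
end
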